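/- Let n ≥ 1 and let A, B ∈ M_n(ℂ). Then there exists a contraction W ∈ M_n(ℂ) (i.e., ‖W‖ ≤ 1) such that A + B = (I + A A*)^{1/2} · W · (I + B* B)^{1/2}. (Factorization established in the proof of the paper's Theorem 3.3.) -/

import Mathlib

open Matrix
open scoped ComplexOrder

namespace Matrix.PosSemidef

/-- The positive semidefinite square root of a positive semidefinite matrix
(the definition of Mathlib of December 2024, since removed). -/
noncomputable def sqrt {n : Type*} [Fintype n] [DecidableEq n] {A : Matrix n n ℂ}
    (hA : A.PosSemidef) : Matrix n n ℂ :=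
  hA.1.eigenvectorUnitary.1 * diagonal ((↑) ∘ (√·) ∘ hA.1.eigenvalues) *
  (star hA.1.eigenvectorUnitary : Matrix n n ℂ)

lemma posSemidef_sqrt {n : Type*} [Fintype n] [DecidableEq n] {A : Matrix n n ℂ}
    (hA : A.PosSemidef) : PosSemidef hA.sqrt := by
  unfold sqrt
  apply PosSemidef.mul_mul_conjTranspose_same
  refine posSemidef_diagonal_iff.mpr fun i ↦ ?_
  simp only [Function.comp_apply]
  exact_mod_cast Real.sqrt_nonneg _

end Matrix.PosSemidef

/-- The `j`-th largest value (0-indexed) of a finite family of real numbers. -/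
noncomputable def descSort {n : ℕ} (f : Fin n → ℝ) : Fin n → ℝ :=
  fun j => f (Tuple.sort f j.rev)

/-- The absolute value `|A| = (AᴴA)^{1/2}` of a complex matrix. -/
noncomputable def matAbs {n : ℕ} (A : Matrix (Fin n) (Fin n) ℂ) : Matrix (Fin n) (Fin n) ℂ :=
  (Matrix.posSemidef_conjTranspose_mul_self A).sqrt

/-- The singular values of `A`, in decreasing order, 0-indexed: `sv A 0 = s₁(A)` is the largest. -/
noncomputable def sv {n : ℕ} (A : Matrix (Fin n) (Fin n) ℂ) : Fin n → ℝ :=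
  descSort (Matrix.posSemidef_conjTranspose_mul_self A).posSemidef_sqrt.1.eigenvalues

/-- The real power `A^r` of a (positive semidefinite) matrix, via continuous functional calculus. -/
noncomputable def rpowM {n : ℕ} (A : Matrix (Fin n) (Fin n) ℂ) (r : ℝ) :
    Matrix (Fin n) (Fin n) ℂ :=
  cfc (fun x : ℝ => x ^ r) A


lemma rpowM_half_eq_sqrt {n : ℕ} (M : Matrix (Fin n) (Fin n) ℂ) :
    rpowM M (1/2) = cfc Real.sqrt M := by
  unfold rpowM
  exact cfc_congr fun x _ => (Real.sqrt_eq_rpow x).symm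

lemma rpowM_half_isHermitian {n : ℕ} {M : Matrix (Fin n) (Fin n) ℂ} (hM : M.PosSemidef) :
    (rpowM M (1/2)).IsHermitian := by
  rw [rpowM_half_eq_sqrt]
  have : IsSelfAdjoint (cfc Real.sqrt M) := cfc_predicate _ _
  exact this

lemma rpowM_half_mul_self {n : ℕ} {M : Matrix (Fin n) (Fin n) ℂ} (hM : M.PosSemidef) :
    rpowM M (1/2) * rpowM M (1/2) = M := by
  rw [rpowM_half_eq_sqrt, ← cfc_mul ..]
  have hspec : spectrum ℝ M = Set.range hM.1.eigenvalues :=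
    hM.1.spectrum_real_eq_range_eigenvalues
  have h : ∀ x ∈ spectrum ℝ M, Real.sqrt x * Real.sqrt x = id x := by
    intro x hx
    rw [hspec] at hx
    obtain ⟨i, rfl⟩ := hx
    exact Real.mul_self_sqrt (hM.eigenvalues_nonneg i)
  rw [cfc_congr h]; exact cfc_id ℝ M hM.1

/-- The top-`k` indices `j = 0, …, k-1` in `Fin n`. -/
def topIdx (n k : ℕ) : Finset (Fin n) := Finset.univ.filter (fun j : Fin n => (j : ℕ) < k)

/-- The bottom-`k` indices `j = n-k, …, n-1` in `Fin n`. -/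
def botIdx (n k : ℕ) : Finset (Fin n) := Finset.univ.filter (fun j : Fin n => n - k ≤ (j : ℕ))

/-- factorization from the proof of Theorem 3.3.
For any `A, B`, there is a contraction `W` (i.e. `WᴴW ≤ I`) with
`A + B = (I + AAᴴ)^{1/2} · W · (I + BᴴB)^{1/2}`. -/
theorem add_eq_sqrt_mul_contraction_mul_sqrt {n : ℕ} (hn : 1 ≤ n)
    (A B : Matrix (Fin n) (Fin n) ℂ) :
    ∃ W : Matrix (Fin n) (Fin n) ℂ,
      (1 - Wᴴ * W).PosSemidef ∧
        A + B = rpowM (1 + A * Aᴴ) (1/2) * W * rpowM (1 + Bᴴ * B) (1/2) := by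
  set C := A + B with hC
  set MA := 1 + A * Aᴴ with hMA
  set MB := 1 + Bᴴ * B with hMB
  have hMApd : MA.PosDef :=
    Matrix.PosDef.add_posSemidef Matrix.PosDef.one (posSemidef_self_mul_conjTranspose A)
  have hMBpd : MB.PosDef :=
    Matrix.PosDef.add_posSemidef Matrix.PosDef.one (posSemidef_conjTranspose_mul_self B)
  set P := rpowM MA (1/2) with hP
  set Q := rpowM MB (1/2) with hQ
  have hP2 : P * P = MA := rpowM_half_mul_self hMApd.posSemidef
  have hQ2 : Q * Q = MB := rpowM_half_mul_self hMBpd.posSemidef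
  have hPh : P.IsHermitian := rpowM_half_isHermitian hMApd.posSemidef
  have hQh : Q.IsHermitian := rpowM_half_isHermitian hMBpd.posSemidef
  have hPdet : IsUnit P.det := by
    have : IsUnit (P.det * P.det) := by
      rw [← Matrix.det_mul, hP2]
      exact hMApd.isUnit.map detMonoidHom
    exact isUnit_of_mul_isUnit_left this
  have hQdet : IsUnit Q.det := by
    have : IsUnit (Q.det * Q.det) := by
      rw [← Matrix.det_mul, hQ2]
      exact hMBpd.isUnit.map detMonoidHom
    exact isUnit_of_mul_isUnit_left this
  haveI : Invertible MA := hMApd.isUnit.invertible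
  have hBlock : (fromBlocks MA C Cᴴ MB).PosSemidef := by
    have key : fromBlocks MA C Cᴴ MB =
        (fromBlocks 1 A Bᴴ 1) * (fromBlocks 1 A Bᴴ 1)ᴴ := by
      rw [fromBlocks_conjTranspose, fromBlocks_multiply]
      simp [hC, hMA, hMB, add_comm, conjTranspose_add]
    rw [key]
    exact posSemidef_self_mul_conjTranspose _
  have hSchur : (MB - Cᴴ * MA⁻¹ * C).PosSemidef :=
    (Matrix.PosDef.fromBlocks₁₁ C MB hMApd).mp hBlock
  have hMAinv : MA⁻¹ = P⁻¹ * P⁻¹ := by rw [← hP2, Matrix.mul_inv_rev]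
  have hPinvH : P⁻¹ᴴ = P⁻¹ := by rw [Matrix.conjTranspose_nonsing_inv, hPh.eq]
  have hQinvH : Q⁻¹ᴴ = Q⁻¹ := by rw [Matrix.conjTranspose_nonsing_inv, hQh.eq]
  refine ⟨P⁻¹ * C * Q⁻¹, ?_, ?_⟩
  · have key : 1 - (P⁻¹ * C * Q⁻¹)ᴴ * (P⁻¹ * C * Q⁻¹) =
        Q⁻¹ᴴ * (MB - Cᴴ * MA⁻¹ * C) * Q⁻¹ := by
      rw [Matrix.mul_sub, Matrix.sub_mul, hMAinv, hQinvH, ← hQ2]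
      congr 1
      · rw [show Q⁻¹ * (Q * Q) * Q⁻¹ = (Q⁻¹ * Q) * (Q * Q⁻¹) by noncomm_ring,
          Matrix.nonsing_inv_mul Q hQdet, Matrix.mul_nonsing_inv Q hQdet, one_mul]
      · simp only [conjTranspose_mul, hPinvH, hQinvH]
        noncomm_ring
    rw [key]
    exact hSchur.conjTranspose_mul_mul_same _
  · rw [show P * (P⁻¹ * C * Q⁻¹) * Q = (P * P⁻¹) * C * (Q⁻¹ * Q) by noncomm_ring,
      Matrix.mul_nonsing_inv P hPdet, Matrix.nonsing_inv_mul Q hQdet, one_mul, mul_one]
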